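/- Let 1 < q < 2, 0 < r < 1/q − 1/2, ε > 0 and R > 0 with R ε^{−1} ≥ max(e², u²), where u := 1/r − q(1 + 1/(2r)) > 0. Set M = ε√(u ln(R ε^{−1})), p = 2^J with J = ⌊((2−q)/(2r)) log₂(R/M)⌋, and d = 2^K with K = ⌊q log₂(R/M)⌋. Then M is well defined with R/M ≥ e, d ≤ p, and the hypercube Θ(p,d,M) := { ∑_{j=1}^p θ_j φ_j : θ_j ∈ [0,M] for all j, exactly d of the θ_j are nonzero } is contained in L_q(R) ∩ B^r_{2,∞}(R). -/

import Mathlib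

open MeasureTheory Real

noncomputable section

/-- Membership in the strong `L_q(R)` ball, in terms of the coefficients on the
orthonormal basis `φ`. -/
def inLq {H : Type*} [NormedAddCommGroup H] [InnerProductSpace ℝ H]
    (φ : ℕ → H) (q R : ℝ) (g : H) : Prop :=
  Summable (fun j => |(inner ℝ (φ j) g : ℝ)| ^ q) ∧
    ∑' j : ℕ, |(inner ℝ (φ j) g : ℝ)| ^ q ≤ R ^ q

/-- Membership in the Besov ball `B^r_{2,∞}(R)`, in terms of the coefficients on the
orthonormal basis `φ` (here `φ j` stands for `φ_{j+1}`, `j ∈ ℕ`). -/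
def inBesov {H : Type*} [NormedAddCommGroup H] [InnerProductSpace ℝ H]
    (φ : ℕ → H) (r R : ℝ) (g : H) : Prop :=
  ∀ J : ℕ, ((J : ℝ) + 1) ^ (2 * r) *
      (∑' j : ℕ, if J ≤ j then (inner ℝ (φ j) g : ℝ) ^ 2 else 0) ≤ R ^ 2

set_option maxHeartbeats 1000000 in
/-- The hypercube `Θ(p,d,M)` is contained in `L_q(R) ∩ B^r_{2,∞}(R)`. -/
theorem statement_17 :
    ∀ q r ε R : ℝ, 1 < q → q < 2 → 0 < r → r < 1 / q - 1 / 2 → 0 < ε → 0 < R →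
    ∀ u : ℝ, u = 1 / r - q * (1 + 1 / (2 * r)) →
    0 < u →
    max (Real.exp 2) (u ^ 2) ≤ R / ε →
    ∀ M : ℝ, M = ε * Real.sqrt (u * Real.log (R / ε)) →
    ∀ p : ℕ, p = 2 ^ (⌊(2 - q) / (2 * r) * Real.logb 2 (R / M)⌋₊) →
    ∀ dd : ℕ, dd = 2 ^ (⌊q * Real.logb 2 (R / M)⌋₊) →
    0 < M ∧ Real.exp 1 ≤ R / M ∧ dd ≤ p ∧
    ∀ (H : Type) [NormedAddCommGroup H] [InnerProductSpace ℝ H]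
      (φ : ℕ → H), Orthonormal ℝ φ →
      (Submodule.span ℝ (Set.range φ)).topologicalClosure = ⊤ →
    ∀ θ : Fin p → ℝ, (∀ j, θ j ∈ Set.Icc (0 : ℝ) M) →
      Set.ncard {j : Fin p | θ j ≠ 0} = dd →
      inLq φ q R (∑ j : Fin p, θ j • φ (j : ℕ)) ∧
      inBesov φ r R (∑ j : Fin p, θ j • φ (j : ℕ)) := by
  intro q r ε R hq1 hq2 hr hrq hε hR u hu hupos hmax M hM p hp dd hdd
  have he1 : (0:ℝ) < Real.exp 1 := Real.exp_pos 1
  have he1' : (1:ℝ) < Real.exp 1 := by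
    have := Real.add_one_le_exp (1:ℝ); linarith
  have he2 : Real.exp 2 = Real.exp 1 * Real.exp 1 := by
    rw [← Real.exp_add]; norm_num
  set x := R / ε with hxdef
  have hxpos : 0 < x := div_pos hR hε
  have hxe2 : Real.exp 2 ≤ x := le_trans (le_max_left _ _) hmax
  have hxu2 : u ^ 2 ≤ x := le_trans (le_max_right _ _) hmax
  have hx1 : 1 < x := lt_of_lt_of_le (by nlinarith) hxe2
  have hlogpos : 0 < Real.log x := Real.log_pos hx1
  have hMpos : 0 < M := by
    rw [hM]; exact mul_pos hε (Real.sqrt_pos.mpr (mul_pos hupos hlogpos))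
  -- log x ≤ x / e
  have hloge : Real.log x ≤ x / Real.exp 1 := by
    have h1 : Real.log (x / Real.exp 1) ≤ x / Real.exp 1 - 1 :=
      Real.log_le_sub_one_of_pos (div_pos hxpos he1)
    rw [Real.log_div (ne_of_gt hxpos) (ne_of_gt he1), Real.log_exp] at h1
    linarith
  -- u ≤ √x ≤ x/e
  have hsx : u ≤ Real.sqrt x := (Real.le_sqrt hupos.le hxpos.le).mpr hxu2
  have hsx2 : Real.sqrt x ≤ x / Real.exp 1 := by
    rw [show x / Real.exp 1 = Real.sqrt ((x / Real.exp 1)^2) from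
      (Real.sqrt_sq (by positivity)).symm]
    apply Real.sqrt_le_sqrt
    rw [div_pow]
    rw [le_div_iff₀ (by positivity)]
    calc x * Real.exp 1 ^ 2 = x * Real.exp 2 := by rw [he2]; ring
      _ ≤ x * x := by nlinarith
      _ = x ^ 2 := (sq x).symm
  have hMle : M ≤ R / Real.exp 1 := by
    have hbound : u * Real.log x ≤ (x / Real.exp 1) ^ 2 := by
      calc u * Real.log x ≤ (x / Real.exp 1) * (x / Real.exp 1) := by
            apply mul_le_mul (hsx.trans hsx2) hloge hlogpos.le (by positivity)
        _ = (x / Real.exp 1) ^ 2 := (sq _).symm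
    have : Real.sqrt (u * Real.log x) ≤ x / Real.exp 1 := by
      rw [show x / Real.exp 1 = Real.sqrt ((x / Real.exp 1)^2) from
        (Real.sqrt_sq (by positivity)).symm]
      exact Real.sqrt_le_sqrt hbound
    calc M = ε * Real.sqrt (u * Real.log x) := hM
      _ ≤ ε * (x / Real.exp 1) := by nlinarith [Real.sqrt_nonneg (u * Real.log x)]
      _ = R / Real.exp 1 := by rw [hxdef]; field_simp
  have hRM : Real.exp 1 ≤ R / M := by
    rw [le_div_iff₀ hMpos]
    calc Real.exp 1 * M ≤ Real.exp 1 * (R / Real.exp 1) := by nlinarith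
      _ = R := by field_simp
  have hRM1 : 1 < R / M := lt_of_lt_of_le he1' hRM
  have hRMpos : 0 < R / M := lt_trans one_pos hRM1
  set L := Real.logb 2 (R / M) with hL
  have hLpos : 0 < L := Real.logb_pos (by norm_num) hRM1
  have hq0 : (0:ℝ) < q := by linarith
  have h2q : (0:ℝ) < 2 - q := by linarith
  have hqr : q ≤ (2 - q) / (2 * r) := by
    rw [le_div_iff₀ (by positivity)]
    have h3 : r * q < (1/q - 1/2) * q := mul_lt_mul_of_pos_right hrq hq0
    have h2 : (1/q - 1/2) * q = 1 - q/2 := by field_simp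
    rw [h2] at h3
    nlinarith
  have hdp : dd ≤ p := by
    rw [hp, hdd]
    exact Nat.pow_le_pow_right (by norm_num)
      (Nat.floor_le_floor (mul_le_mul_of_nonneg_right hqr hLpos.le))
  -- rpow bounds
  have h2L : (2:ℝ) ^ L = R / M := Real.rpow_logb two_pos (by norm_num) hRMpos
  have hpow : ∀ c : ℝ, 0 ≤ c → ((2:ℕ) ^ (⌊c * L⌋₊) : ℝ) ≤ (R / M) ^ c := by
    intro c hc
    have h1 : ((2:ℕ) ^ (⌊c * L⌋₊) : ℝ) = (2:ℝ) ^ ((⌊c * L⌋₊ : ℕ) : ℝ) := by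
      push_cast [Real.rpow_natCast]; ring
    rw [h1]
    calc (2:ℝ) ^ ((⌊c * L⌋₊ : ℕ) : ℝ) ≤ (2:ℝ) ^ (c * L) :=
          Real.rpow_le_rpow_of_exponent_le one_le_two (Nat.floor_le (by positivity))
      _ = (2:ℝ) ^ (L * c) := by ring_nf
      _ = ((2:ℝ) ^ L) ^ c := Real.rpow_mul (by norm_num) L c
      _ = (R / M) ^ c := by rw [h2L]
  have hdle : (dd:ℝ) ≤ (R / M) ^ q := by rw [hdd]; exact_mod_cast hpow q hq0.le
  have hple : (p:ℝ) ≤ (R / M) ^ ((2 - q) / (2 * r)) := by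
    rw [hp]; exact_mod_cast hpow _ (by positivity)
  have hple2 : (p:ℝ) ^ (2*r) ≤ (R / M) ^ (2 - q) := by
    calc (p:ℝ) ^ (2*r) ≤ ((R / M) ^ ((2 - q) / (2 * r))) ^ (2*r) :=
          Real.rpow_le_rpow (Nat.cast_nonneg p) hple (by positivity)
      _ = (R / M) ^ ((2 - q) / (2 * r) * (2*r)) := (Real.rpow_mul hRMpos.le _ _).symm
      _ = (R / M) ^ (2 - q) := by rw [div_mul_cancel₀]; positivity
  have hLqbound : (dd:ℝ) * M ^ q ≤ R ^ q := by
    calc (dd:ℝ) * M ^ q ≤ (R / M) ^ q * M ^ q := by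
          apply mul_le_mul_of_nonneg_right hdle (Real.rpow_nonneg hMpos.le q)
      _ = (R / M * M) ^ q := (Real.mul_rpow (by positivity) hMpos.le).symm
      _ = R ^ q := by rw [div_mul_cancel₀ _ (ne_of_gt hMpos)]
  have hBbound : (p:ℝ) ^ (2*r) * ((dd:ℝ) * M ^ 2) ≤ R ^ 2 := by
    calc (p:ℝ) ^ (2*r) * ((dd:ℝ) * M ^ 2)
        ≤ (R / M) ^ (2 - q) * ((R / M) ^ q * M ^ 2) := by
          apply mul_le_mul hple2 (mul_le_mul_of_nonneg_right hdle (by positivity))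
            (by positivity) (by positivity)
      _ = ((R / M) ^ (2 - q) * (R / M) ^ q) * M ^ 2 := by ring
      _ = (R / M) ^ ((2:ℝ)) * M ^ 2 := by
          rw [← Real.rpow_add hRMpos]; norm_num
      _ = (R / M) ^ (2:ℕ) * M ^ 2 := by
          rw [show ((2:ℝ)) = ((2:ℕ):ℝ) by norm_num, Real.rpow_natCast]
      _ = R ^ 2 := by field_simp
  refine ⟨hMpos, hRM, hdp, ?_⟩
  intro H _ _ φ hφ _ θ hθ hncard
  set g := ∑ j : Fin p, θ j • φ (j : ℕ) with hg
  have hcoef : ∀ i : ℕ, (inner ℝ (φ i) g : ℝ) = if h : i < p then θ ⟨i, h⟩ else 0 := by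
    intro i
    rw [hg, inner_sum]
    simp_rw [real_inner_smul_right, orthonormal_iff_ite.mp hφ]
    by_cases h : i < p
    · rw [dif_pos h, Finset.sum_eq_single (⟨i, h⟩ : Fin p)]
      · simp
      · intro b _ hb
        rw [if_neg, mul_zero]
        intro he
        exact hb (Fin.ext (by simpa using he.symm))
      · simp
    · rw [dif_neg h, Finset.sum_eq_zero]
      intro b _
      rw [if_neg, mul_zero]
      intro he
      exact h (he ▸ b.isLt)
  -- card of nonzero support
  have hcard : (Finset.univ.filter fun j : Fin p => θ j ≠ 0).card = dd := by
    rw [← hncard, show {j : Fin p | θ j ≠ 0} =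
      ↑(Finset.univ.filter fun j : Fin p => θ j ≠ 0) by ext j; simp,
      Set.ncard_coe_finset]
  -- generic bound
  have key : ∀ (w : ℕ → ℝ) (c : ℝ), 0 ≤ c →
      (∀ i : Fin p, θ i ≠ 0 → w i ≤ c) → (∀ i : Fin p, θ i = 0 → w (i:ℕ) = 0) →
      ∑ i ∈ Finset.range p, w i ≤ dd * c := by
    intro w c hc hle hzero
    rw [← Fin.sum_univ_eq_sum_range w p]
    calc ∑ j : Fin p, w (j:ℕ)
        = ∑ j ∈ Finset.univ.filter (fun j : Fin p => θ j ≠ 0), w (j:ℕ) := by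
          refine (Finset.sum_filter_of_ne ?_).symm
          intro j _ hw hzj
          exact hw (hzero j hzj)
      _ ≤ ∑ _j ∈ Finset.univ.filter (fun j : Fin p => θ j ≠ 0), c :=
          Finset.sum_le_sum (fun j hj => hle j (Finset.mem_filter.mp hj).2)
      _ = (Finset.univ.filter fun j : Fin p => θ j ≠ 0).card * c := by
          rw [Finset.sum_const, nsmul_eq_mul]
      _ = dd * c := by rw [hcard]
  have hqne : q ≠ 0 := ne_of_gt hq0
  constructor
  · -- inLq
    have hvan : ∀ i ∉ Finset.range p, |(inner ℝ (φ i) g : ℝ)| ^ q = 0 := by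
      intro i hi
      rw [hcoef i, dif_neg (by simpa using hi), abs_zero, Real.zero_rpow hqne]
    refine ⟨summable_of_ne_finset_zero hvan, ?_⟩
    rw [tsum_eq_sum hvan]
    calc ∑ i ∈ Finset.range p, |(inner ℝ (φ i) g : ℝ)| ^ q ≤ dd * M ^ q := by
          apply key _ _ (Real.rpow_nonneg hMpos.le q)
          · intro i _
            rw [hcoef i, dif_pos i.isLt]
            have h1 := (hθ ⟨i, i.isLt⟩).1
            have h2 := (hθ ⟨i, i.isLt⟩).2
            rw [abs_of_nonneg (by simpa using h1)]
            exact Real.rpow_le_rpow (by simpa using h1) (by simpa using h2) hq0.le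
          · intro i hi
            rw [hcoef i, dif_pos i.isLt]
            simp only [Fin.eta] at *
            rw [hi, abs_zero, Real.zero_rpow hqne]
      _ ≤ R ^ q := hLqbound
  · -- inBesov
    intro J
    have hvan : ∀ i ∉ Finset.range p,
        (if J ≤ i then (inner ℝ (φ i) g : ℝ) ^ 2 else 0) = 0 := by
      intro i hi
      rw [hcoef i, dif_neg (by simpa using hi)]
      simp
    rw [tsum_eq_sum hvan]
    by_cases hJ : J < p
    · have hsum : ∑ i ∈ Finset.range p, (if J ≤ i then (inner ℝ (φ i) g : ℝ) ^ 2 else 0)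
          ≤ dd * M ^ 2 := by
        apply key _ _ (by positivity)
        · intro i _
          rw [hcoef i, dif_pos i.isLt]
          have h1 := (hθ ⟨i, i.isLt⟩).1
          have h2 := (hθ ⟨i, i.isLt⟩).2
          split_ifs
          · simp only [Fin.eta] at *; nlinarith
          · positivity
        · intro i hi
          rw [hcoef i, dif_pos i.isLt]
          simp only [Fin.eta] at *
          rw [hi]; simp
      have hsumnn : 0 ≤ ∑ i ∈ Finset.range p,
          (if J ≤ i then (inner ℝ (φ i) g : ℝ) ^ 2 else 0) := by
        apply Finset.sum_nonneg; intro i _; split_ifs <;> positivity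
      have hJp : ((J:ℝ) + 1) ^ (2*r) ≤ (p:ℝ) ^ (2*r) := by
        apply Real.rpow_le_rpow (by positivity) (by exact_mod_cast Nat.succ_le_of_lt hJ)
          (by positivity)
      calc ((J:ℝ) + 1) ^ (2*r) *
            ∑ i ∈ Finset.range p, (if J ≤ i then (inner ℝ (φ i) g : ℝ) ^ 2 else 0)
          ≤ (p:ℝ) ^ (2*r) * ((dd:ℝ) * M ^ 2) := by
            apply mul_le_mul hJp hsum hsumnn (by positivity)
        _ ≤ R ^ 2 := hBbound
    · have : ∑ i ∈ Finset.range p, (if J ≤ i then (inner ℝ (φ i) g : ℝ) ^ 2 else 0) = 0 := by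
        apply Finset.sum_eq_zero
        intro i hi
        have hni : ¬ J ≤ i := by
          have := Finset.mem_range.mp hi
          omega
        rw [if_neg hni]
      rw [this, mul_zero]
      positivity
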